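/- arXiv:math/0703316 — 2 statements merged into one kernel-verified Lean document; each statement's English description precedes it below -/
import Mathlib

section
/- Let E(k), for k ∈ (0,1), be a family of integral operators on a space with measure dg_b, whose Schwartz kernels satisfy |E(k; z, z')| ≤ C x(z)^{1−ε} · x'(z')/(x'(z') + k) in coordinates where x, x' ∈ (0,1) are boundary defining functions and the measure near the boundary is (dx/x) dy on (0,1) × S³. Then the operators E'(k) = E(k)/log k satisfy ‖E'(k)‖_{HS} ≤ C' |log k|^{−1/3} for k small, where ‖·‖_{HS} is the Hilbert–Schmidt norm. -/
open Real MeasureTheory Filter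
open scoped ENNReal

/-- The b-measure `(dx/x) ⊗ dσ(y)` on the collar `(0,1) × Y`. -/
noncomputable def bMeasure {Y : Type*} [MeasurableSpace Y] (σ : Measure Y) :
    Measure (ℝ × Y) :=
  (((volume : Measure ℝ).restrict (Set.Ioo (0:ℝ) 1)).withDensity
      (fun x => ENNReal.ofReal x⁻¹)).prod σ

lemma aux_lintegral_fst {Y : Type*} [MeasurableSpace Y] (ν : Measure ℝ) [SFinite ν]
    (σ : Measure Y) [SFinite σ] (h : ℝ → ℝ≥0∞) (hh : Measurable h) :
    ∫⁻ p : ℝ × Y, h p.1 ∂(ν.prod σ) = (∫⁻ x, h x ∂ν) * σ Set.univ := by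
  rw [MeasureTheory.lintegral_prod (fun p : ℝ × Y => h p.1) ((hh.comp measurable_fst).aemeasurable)]
  simp [lintegral_const, lintegral_mul_const _ hh]

/-- Finiteness of `∫₀¹ x^{2(1-ε)} dx/x`. -/
lemma aux_AH_fin {ε : ℝ} (hε : 0 < ε) (hε1 : ε < 1) :
    ∫⁻ x in Set.Ioo (0:ℝ) 1,
      ENNReal.ofReal x⁻¹ * ENNReal.ofReal ((x ^ (1-ε))^2) < ⊤ := by
  have hcong : ∀ x ∈ Set.Ioo (0:ℝ) 1,
      ENNReal.ofReal x⁻¹ * ENNReal.ofReal ((x ^ (1-ε))^2)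
        = ENNReal.ofReal (x ^ (1 - 2*ε)) := by
    intro x hx
    rw [← ENNReal.ofReal_mul (inv_nonneg.mpr hx.1.le)]
    congr 1
    rw [sq, ← Real.rpow_add hx.1, ← Real.rpow_neg_one x, ← Real.rpow_add hx.1]
    ring_nf
  rw [setLIntegral_congr_fun measurableSet_Ioo hcong]
  have hint : IntegrableOn (fun x : ℝ => x ^ (1 - 2*ε)) (Set.Ioo (0:ℝ) 1) := by
    rw [intervalIntegral.integrableOn_Ioo_rpow_iff zero_lt_one]; linarith
  have := hint.2
  rw [HasFiniteIntegral] at this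
  refine lt_of_le_of_lt (le_of_eq ?_) this
  refine lintegral_congr_ae ?_
  filter_upwards [ae_restrict_mem measurableSet_Ioo] with x hx
  rw [← Real.enorm_eq_ofReal (Real.rpow_nonneg hx.1.le _)]

/-- The key integral bound `∫₀¹ (x/(x+k))² dx/x ≤ log 2 + |log k|`. -/
lemma aux_AG_bound {k : ℝ} (hk : 0 < k) (hk1 : k < 1) :
    ∫⁻ x in Set.Ioo (0:ℝ) 1,
      ENNReal.ofReal x⁻¹ * ENNReal.ofReal ((x / (x + k))^2)
      ≤ ENNReal.ofReal (Real.log 2 + (- Real.log k)) := by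
  have hstep : ∀ x ∈ Set.Ioo (0:ℝ) 1,
      ENNReal.ofReal x⁻¹ * ENNReal.ofReal ((x / (x + k))^2)
        ≤ ENNReal.ofReal ((x + k)⁻¹) := by
    intro x hx
    rw [← ENNReal.ofReal_mul (inv_nonneg.mpr hx.1.le)]
    apply ENNReal.ofReal_le_ofReal
    have hxk : 0 < x + k := by linarith [hx.1]
    have key : x⁻¹ * (x / (x + k)) ^ 2 = x / (x + k)^2 := by
      field_simp [hx.1.ne']
    rw [key, div_le_iff₀ (by positivity), sq, inv_mul_cancel_left₀ hxk.ne']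
    linarith
  calc ∫⁻ x in Set.Ioo (0:ℝ) 1,
      ENNReal.ofReal x⁻¹ * ENNReal.ofReal ((x / (x + k))^2)
      ≤ ∫⁻ x in Set.Ioo (0:ℝ) 1, ENNReal.ofReal ((x + k)⁻¹) := by
        refine setLIntegral_mono_ae (by fun_prop) ?_
        exact Filter.Eventually.of_forall hstep
    _ ≤ ENNReal.ofReal (Real.log 2 + (- Real.log k)) := by
        have hint : IntegrableOn (fun x : ℝ => (x + k)⁻¹) (Set.Ioo (0:ℝ) 1) := by
          apply (ContinuousOn.integrableOn_Icc ?_).mono_set Set.Ioo_subset_Icc_self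
          apply ContinuousOn.inv₀ (by fun_prop)
          intro x hx; have := hx.1; positivity
        rw [← ofReal_integral_eq_lintegral_ofReal hint]
        · apply ENNReal.ofReal_le_ofReal
          have h1 : ∫ x in Set.Ioo (0:ℝ) 1, (x + k)⁻¹ = ∫ x in (0:ℝ)..1, (x + k)⁻¹ := by
            rw [intervalIntegral.integral_of_le zero_le_one,
              MeasureTheory.integral_Ioc_eq_integral_Ioo]
          have h2 : ∫ x in (0:ℝ)..1, (x + k)⁻¹ = Real.log ((1+k)/k) := by
            rw [intervalIntegral.integral_comp_add_right (fun u => u⁻¹) k]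
            simp only [zero_add]
            rw [← integral_one_div]
            · simp [one_div]
            · intro h
              rcases Set.mem_uIcc.mp h with h' | h' <;> linarith [h'.1, h'.2]
          have h3 : ∫ x in Set.Ioo (0:ℝ) 1, (x + k)⁻¹
              = Real.log (1+k) - Real.log k := by
            rw [h1, h2, Real.log_div (by positivity) (by positivity)]
          rw [h3]
          have hlog2 : Real.log (1 + k) ≤ Real.log 2 :=
            Real.log_le_log (by positivity) (by linarith)
          linarith
        · filter_upwards [ae_restrict_mem measurableSet_Ioo] with x hx
          have : (0:ℝ) < x + k := by linarith [hx.1]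
          positivity

/-- If the kernels `E(k; z, z')` satisfy
`|E(k; z, z')| ≤ C x^{1-ε} x'/(x'+k)`, then the operators `E'(k) = E(k)/log k`
have Hilbert–Schmidt norm `≤ C' |log k|^{-1/3}` for small `k`. -/
theorem stmt12 {Y : Type*} [MeasurableSpace Y] (σ : Measure Y) [IsFiniteMeasure σ]
    (E : ℝ → (ℝ × Y) → (ℝ × Y) → ℝ) (C ε : ℝ) (hε : 0 < ε) (hε1 : ε < 1)
    (hmeas : ∀ k, Measurable (fun p : (ℝ × Y) × (ℝ × Y) => E k p.1 p.2))
    (hbound : ∀ k ∈ Set.Ioo (0:ℝ) 1, ∀ p q : ℝ × Y,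
      p.1 ∈ Set.Ioo (0:ℝ) 1 → q.1 ∈ Set.Ioo (0:ℝ) 1 →
      |E k p q| ≤ C * p.1 ^ (1 - ε) * (q.1 / (q.1 + k))) :
    ∃ C' k₁ : ℝ, 0 < k₁ ∧ k₁ < 1 ∧ ∀ k ∈ Set.Ioo (0:ℝ) k₁,
      Real.sqrt (∫ p, ∫ q, (E k p q / Real.log k) ^ 2
          ∂(bMeasure σ) ∂(bMeasure σ))
        ≤ C' * |Real.log k| ^ (-(1:ℝ)/3) := by
  classical
  set ν : Measure ℝ :=
    (((volume : Measure ℝ).restrict (Set.Ioo (0:ℝ) 1)).withDensity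
      (fun x => ENNReal.ofReal x⁻¹)) with hν
  set μ : Measure (ℝ × Y) := bMeasure σ with hμ
  have hμdef : μ = ν.prod σ := rfl
  -- a.e. the first coordinate is in (0,1)
  have hν0 : ν ((Set.Ioo (0:ℝ) 1)ᶜ) = 0 := by
    apply withDensity_absolutelyContinuous _ _
    simp [Measure.restrict_apply (measurableSet_Ioo.compl)]
  have hae : ∀ᵐ p ∂μ, p.1 ∈ Set.Ioo (0:ℝ) 1 := by
    rw [ae_iff]
    have hset : {p : ℝ × Y | ¬ p.1 ∈ Set.Ioo (0:ℝ) 1}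
        = (Set.Ioo (0:ℝ) 1)ᶜ ×ˢ (Set.univ : Set Y) := by
      ext p; simp
    rw [hμdef, hset, Measure.prod_prod, hν0, zero_mul]
  -- the finite constant
  set AH : ℝ≥0∞ := ∫⁻ x in Set.Ioo (0:ℝ) 1,
      ENNReal.ofReal x⁻¹ * ENNReal.ofReal ((x ^ (1-ε))^2) with hAH
  have hAHfin : AH < ⊤ := aux_AH_fin hε hε1
  set D : ℝ := 2 * C^2 * AH.toReal * (σ Set.univ).toReal^2 with hD
  have hD0 : 0 ≤ D := by positivity
  refine ⟨Real.sqrt D, Real.exp (-1), Real.exp_pos _, by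
    rw [Real.exp_lt_one_iff]; norm_num, ?_⟩
  intro k hk
  obtain ⟨hk0, hkk⟩ := hk
  have hk1 : k < 1 := lt_trans hkk (by rw [Real.exp_lt_one_iff]; norm_num)
  have hlogk : Real.log k < -1 := by
    have := Real.log_lt_log hk0 hkk
    rwa [Real.log_exp] at this
  set L : ℝ := - Real.log k with hL
  have hL1 : 1 < L := by simp only [hL]; linarith
  have hL0 : 0 < L := by linarith
  have habs : |Real.log k| = L := by rw [abs_of_neg (by linarith)]
  -- pointwise bound
  have hptw : ∀ᵐ p ∂μ, ∀ᵐ q ∂μ,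
      ENNReal.ofReal ((E k p q / Real.log k) ^ 2)
        ≤ ENNReal.ofReal (C^2 / L^2) *
          (ENNReal.ofReal ((p.1 ^ (1-ε))^2) * ENNReal.ofReal ((q.1 / (q.1 + k))^2)) := by
    filter_upwards [hae] with p hp
    filter_upwards [hae] with q hq
    rw [← ENNReal.ofReal_mul (by positivity), ← ENNReal.ofReal_mul (by positivity)]
    apply ENNReal.ofReal_le_ofReal
    have hb := hbound k ⟨hk0, hk1⟩ p q hp hq
    have hE2 : (E k p q)^2 ≤ (C * p.1 ^ (1 - ε) * (q.1 / (q.1 + k)))^2 := by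
      rw [← sq_abs (E k p q)]
      exact pow_le_pow_left₀ (abs_nonneg _) hb 2
    have hlsq : (Real.log k)^2 = L^2 := by rw [hL]; ring
    have h2 : C^2 / L^2 * ((p.1 ^ (1-ε))^2 * (q.1 / (q.1 + k))^2)
        = (C * p.1 ^ (1 - ε) * (q.1 / (q.1 + k)))^2 / L^2 := by ring
    rw [div_pow, hlsq, h2]
    gcongr
  -- measurability facts
  have hH : Measurable fun x : ℝ => ENNReal.ofReal ((x ^ (1-ε))^2) := by
    apply Measurable.ennreal_ofReal
    exact ((Real.continuous_rpow_const (by linarith : (0:ℝ) ≤ 1-ε)).measurable.pow_const 2)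
  have hG : Measurable fun x : ℝ => ENNReal.ofReal ((x / (x + k))^2) := by
    apply Measurable.ennreal_ofReal
    exact ((measurable_id.div (measurable_id.add_const k)).pow_const 2)
  have hfm : Measurable fun z : (ℝ × Y) × (ℝ × Y) => (E k z.1 z.2 / Real.log k) ^ 2 :=
    ((hmeas k).div_const _).pow_const 2
  -- the iterated lintegral bound
  set B : ℝ≥0∞ := ∫⁻ p, ∫⁻ q, ENNReal.ofReal ((E k p q / Real.log k) ^ 2) ∂μ ∂μ with hB
  have hJG : (∫⁻ q : ℝ × Y, ENNReal.ofReal ((q.1 / (q.1 + k))^2) ∂μ)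
      ≤ ENNReal.ofReal (2 * L) * σ Set.univ := by
    rw [hμdef, aux_lintegral_fst ν σ _ hG]
    apply mul_le_mul_left
    calc (∫⁻ x, ENNReal.ofReal ((x / (x + k))^2) ∂ν)
        = ∫⁻ x in Set.Ioo (0:ℝ) 1,
            ENNReal.ofReal x⁻¹ * ENNReal.ofReal ((x / (x + k))^2) := by
          rw [hν, lintegral_withDensity_eq_lintegral_mul _
            (by fun_prop) hG]
          rfl
      _ ≤ ENNReal.ofReal (Real.log 2 + L) := aux_AG_bound hk0 hk1
      _ ≤ ENNReal.ofReal (2 * L) := by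
          apply ENNReal.ofReal_le_ofReal
          have h2 : Real.log 2 < 1 := by
            have := Real.log_lt_sub_one_of_pos (by norm_num : (0:ℝ) < 2) (by norm_num)
            linarith
          linarith
  have hJH : (∫⁻ p : ℝ × Y, ENNReal.ofReal ((p.1 ^ (1-ε))^2) ∂μ) = AH * σ Set.univ := by
    rw [hμdef, aux_lintegral_fst ν σ _ hH]
    congr 1
    rw [hν, lintegral_withDensity_eq_lintegral_mul _ (by fun_prop) hH]
    rfl
  have hBbound : B ≤ ENNReal.ofReal (D / L) := by
    have step1 : B ≤ ∫⁻ p, ENNReal.ofReal (C^2 / L^2) *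
        (ENNReal.ofReal ((p.1 ^ (1-ε))^2) *
          (ENNReal.ofReal (2 * L) * σ Set.univ)) ∂μ := by
      rw [hB]
      refine lintegral_mono_ae ?_
      filter_upwards [hptw] with p hp
      calc (∫⁻ q, ENNReal.ofReal ((E k p q / Real.log k) ^ 2) ∂μ)
          ≤ ∫⁻ q, ENNReal.ofReal (C^2 / L^2) *
              (ENNReal.ofReal ((p.1 ^ (1-ε))^2) *
                ENNReal.ofReal ((q.1 / (q.1 + k))^2)) ∂μ := lintegral_mono_ae hp
        _ = ENNReal.ofReal (C^2 / L^2) * (ENNReal.ofReal ((p.1 ^ (1-ε))^2) *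
              ∫⁻ q, ENNReal.ofReal ((q.1 / (q.1 + k))^2) ∂μ) := by
            rw [lintegral_const_mul' _ _ ENNReal.ofReal_ne_top,
              lintegral_const_mul' _ _ ENNReal.ofReal_ne_top]
        _ ≤ ENNReal.ofReal (C^2 / L^2) *
              (ENNReal.ofReal ((p.1 ^ (1-ε))^2) * (ENNReal.ofReal (2 * L) * σ Set.univ)) := by
            exact mul_le_mul_right (mul_le_mul_right hJG _) _
    have step2 : (∫⁻ p, ENNReal.ofReal (C^2 / L^2) *
        (ENNReal.ofReal ((p.1 ^ (1-ε))^2) * (ENNReal.ofReal (2 * L) * σ Set.univ)) ∂μ)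
        = ENNReal.ofReal (C^2 / L^2) * (ENNReal.ofReal (2 * L) * σ Set.univ) *
            (AH * σ Set.univ) := by
      rw [lintegral_const_mul' _ _ ENNReal.ofReal_ne_top,
        lintegral_mul_const' _ _ (by
          exact ENNReal.mul_ne_top ENNReal.ofReal_ne_top (measure_ne_top σ _)), hJH]
      ring
    refine le_trans step1 (le_trans (le_of_eq step2) ?_)
    -- convert everything to ofReal
    have hσ : σ Set.univ = ENNReal.ofReal ((σ Set.univ).toReal) := by
      rw [ENNReal.ofReal_toReal (measure_ne_top σ _)]
    have hAHr : AH = ENNReal.ofReal AH.toReal := by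
      rw [ENNReal.ofReal_toReal hAHfin.ne]
    rw [hσ, hAHr, ← ENNReal.ofReal_mul (by positivity), ← ENNReal.ofReal_mul (by positivity),
      ← ENNReal.ofReal_mul (by positivity), ← ENNReal.ofReal_mul (by positivity)]
    apply ENNReal.ofReal_le_ofReal
    rw [hD]
    apply le_of_eq
    have : C ^ 2 / L ^ 2 * (2 * L) = 2 * C^2 / L := by
      field_simp
    calc C ^ 2 / L ^ 2 * (2 * L * (σ Set.univ).toReal) * (AH.toReal * (σ Set.univ).toReal)
        = (C ^ 2 / L ^ 2 * (2 * L)) * (AH.toReal * (σ Set.univ).toReal^2) := by ring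
      _ = 2 * C ^ 2 * AH.toReal * (σ Set.univ).toReal ^ 2 / L := by rw [this]; ring
  -- relate the Bochner integral to B
  have hinner_eq : ∀ p : ℝ × Y, (∫ q, (E k p q / Real.log k) ^ 2 ∂μ)
      = (∫⁻ q, ENNReal.ofReal ((E k p q / Real.log k) ^ 2) ∂μ).toReal := by
    intro p
    apply integral_eq_lintegral_of_nonneg_ae
    · exact Filter.Eventually.of_forall fun q => sq_nonneg _
    · exact (hfm.comp measurable_prodMk_left).aestronglyMeasurable
  haveI : SFinite μ := by rw [hμdef]; infer_instance
  have houter_meas : AEStronglyMeasurable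
      (fun p => ∫ q, (E k p q / Real.log k) ^ 2 ∂μ) μ := by
    have h' : StronglyMeasurable
        (Function.uncurry fun (p q : ℝ × Y) => (E k p q / Real.log k) ^ 2) :=
      hfm.stronglyMeasurable
    exact h'.integral_prod_right.aestronglyMeasurable
  have hint_le : (∫ p, ∫ q, (E k p q / Real.log k) ^ 2 ∂μ ∂μ) ≤ D / L := by
    rw [integral_eq_lintegral_of_nonneg_ae
      (Filter.Eventually.of_forall fun p => by
        rw [hinner_eq]; exact ENNReal.toReal_nonneg) houter_meas]
    apply ENNReal.toReal_le_of_le_ofReal (div_nonneg hD0 hL0.le)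
    refine le_trans (lintegral_mono fun p => ?_) hBbound
    rw [hinner_eq]
    exact ENNReal.ofReal_toReal_le
  -- conclude
  have hsqrt : Real.sqrt (∫ p, ∫ q, (E k p q / Real.log k) ^ 2 ∂μ ∂μ)
      ≤ Real.sqrt (D / L) := Real.sqrt_le_sqrt hint_le
  refine le_trans hsqrt ?_
  rw [habs]
  have hhalf : L ^ (-(1:ℝ)/2) = (Real.sqrt L)⁻¹ := by
    rw [Real.sqrt_eq_rpow, ← Real.rpow_neg hL0.le]
    norm_num
  calc Real.sqrt (D / L) = Real.sqrt D / Real.sqrt L := Real.sqrt_div hD0 L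
    _ = Real.sqrt D * L ^ (-(1:ℝ)/2) := by rw [hhalf, div_eq_mul_inv]
    _ ≤ Real.sqrt D * L ^ (-(1:ℝ)/3) := by
        apply mul_le_mul_of_nonneg_left _ (Real.sqrt_nonneg D)
        apply Real.rpow_le_rpow_of_exponent_le hL1.le
        norm_num
end

section
/- Let K(z, z') be an integral kernel on a space M with ends, bounded pointwise (with respect to Riemannian measure on an n-dimensional asymptotically conic manifold, n ≥ 3) by x'^{n+δ} s^{α+δ} on {s = x/x' ≥ 1} for some δ > 0, α = 3 − m' with 0 ≤ m' ≤ 2. Then the associated operator is bounded on L^p(M) for 1 < p < n/α = n/(3 − m'). -/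
open Real MeasureTheory Filter
open scoped ENNReal NNReal

/-- The model measure on an end of an `n`-dimensional asymptotically conic
manifold in the coordinate `x ~ 1/r`: `x^{-n-1} dx ⊗ dσ(y)` on `(0,1) × Y`. -/
noncomputable def acMeasure {Y : Type*} [MeasurableSpace Y] (n : ℕ) (σ : Measure Y) :
    Measure (ℝ × Y) :=
  (((volume : Measure ℝ).restrict (Set.Ioo (0:ℝ) 1)).withDensity
      (fun x => ENNReal.ofReal (x ^ (-(n:ℝ) - 1)))).prod σ

namespace Stmt15Aux

variable {α : Type*} [MeasurableSpace α]

lemma indicator_union_aemeasurable {μ : Measure α} {f : α → ℝ} {S T : Set α}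
    (hS : MeasurableSet S) (hfS : AEMeasurable (S.indicator f) μ)
    (hfT : AEMeasurable (T.indicator f) μ) :
    AEMeasurable ((S ∪ T).indicator f) μ := by
  have heq : (S ∪ T).indicator f
      = fun y => S.indicator f y + Sᶜ.indicator (T.indicator f) y := by
    funext y
    by_cases hyS : y ∈ S
    · simp [Set.indicator_of_mem, hyS, Set.indicator_of_notMem,
        Set.mem_union, Set.indicator_apply]
    · by_cases hyT : y ∈ T <;>
        simp [Set.indicator_apply, hyS, hyT]
  rw [heq]
  exact hfS.add (hfT.indicator hS.compl)

lemma indicator_iUnion_aemeasurable {μ : Measure α} {f : α → ℝ} {A : ℕ → Set α}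
    (hA : ∀ m, MeasurableSet (A m)) (h : ∀ m, AEMeasurable ((A m).indicator f) μ) :
    AEMeasurable ((⋃ m, A m).indicator f) μ := by
  have hAccMeas : ∀ m, MeasurableSet (Set.accumulate A m) := fun m =>
    MeasurableSet.biUnion (Set.to_countable _) (fun k _ => hA k)
  have acc0 : Set.accumulate A 0 = A 0 := by
    ext z; simp [Set.mem_accumulate, Nat.le_zero]
  have accS : ∀ k, Set.accumulate A (k + 1) = Set.accumulate A k ∪ A (k + 1) := by
    intro k; ext z
    simp only [Set.mem_accumulate, Set.mem_union, Nat.le_add_one_iff]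
    constructor
    · rintro ⟨y, hy | rfl, hz⟩
      · exact Or.inl ⟨y, hy, hz⟩
      · exact Or.inr hz
    · rintro (⟨y, hy, hz⟩ | hz)
      · exact ⟨y, Or.inl hy, hz⟩
      · exact ⟨k + 1, Or.inr rfl, hz⟩
  have hacc : ∀ m, AEMeasurable ((Set.accumulate A m).indicator f) μ := by
    intro m
    induction m with
    | zero => rw [acc0]; exact h 0
    | succ k ih =>
      rw [accS]
      exact indicator_union_aemeasurable (hAccMeas k) ih (h _)
  have hU : ⋃ m, Set.accumulate A m = ⋃ m, A m := Set.iUnion_accumulate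
  refine aemeasurable_of_tendsto_metrizable_ae atTop hacc (ae_of_all _ fun y => ?_)
  by_cases hy : y ∈ ⋃ m, A m
  · obtain ⟨k, hk⟩ := Set.mem_iUnion.mp hy
    have hval : ∀ m, k ≤ m → (Set.accumulate A m).indicator f y = f y := by
      intro m hm
      have : y ∈ Set.accumulate A m := Set.monotone_accumulate hm (Set.subset_accumulate hk)
      simp [Set.indicator_of_mem this]
    have hlim : (⋃ m, A m).indicator f y = f y := Set.indicator_of_mem hy _
    rw [hlim]
    refine Filter.Tendsto.congr' ?_ tendsto_const_nhds
    filter_upwards [Filter.eventually_ge_atTop k] with m hm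
    exact (hval m hm).symm
  · have h1 : ∀ m, (Set.accumulate A m).indicator f y = 0 := by
      intro m
      refine Set.indicator_of_notMem (fun hc => hy ?_) _
      rw [← hU]; exact Set.mem_iUnion.mpr ⟨m, hc⟩
    have h2 : (⋃ m, A m).indicator f y = 0 := Set.indicator_of_notMem hy _
    rw [h2]
    simp only [h1]
    exact tendsto_const_nhds

lemma exists_aemeasurable_reduction {μ : Measure α} [SFinite μ]
    {K : α → α → ℝ} (hK : Measurable fun q : α × α => K q.1 q.2) (f : α → ℝ) :
    ∃ g : α → ℝ, AEMeasurable g μ ∧ (∀ y, |g y| ≤ |f y|) ∧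
      ∀ z, (‖∫ y, K z y * f y ∂μ‖₊ : ℝ≥0∞) ≤ (‖∫ y, K z y * g y ∂μ‖₊ : ℝ≥0∞) := by
  obtain ⟨ν, hνfin, hμν, _⟩ := MeasureTheory.exists_isFiniteMeasure_absolutelyContinuous μ
  set P : Set α → Prop := fun A => MeasurableSet A ∧ AEMeasurable (A.indicator f) μ with hPdef
  have hPempty : P ∅ := ⟨MeasurableSet.empty, by simp⟩
  set c : ℝ≥0∞ := ⨆ (A : Set α) (_ : P A), ν A with hcdef
  have hcfin : c ≠ ∞ := by
    refine ne_top_of_le_ne_top (measure_ne_top ν Set.univ) ?_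
    exact iSup_le fun A => iSup_le fun _ => measure_mono (Set.subset_univ A)
  have hseq : ∀ m : ℕ, ∃ A, P A ∧ c - ((m : ℝ≥0∞))⁻¹ ≤ ν A := by
    intro m
    by_cases h0 : c - ((m : ℝ≥0∞))⁻¹ = 0
    · exact ⟨∅, hPempty, by simp [h0]⟩
    · have hc0 : c ≠ 0 := by
        intro hc; apply h0; simp [hc, zero_tsub]
      have hminv : ((m : ℝ≥0∞))⁻¹ ≠ 0 := ENNReal.inv_ne_zero.mpr (ENNReal.natCast_ne_top m)
      have hlt : c - ((m : ℝ≥0∞))⁻¹ < c := ENNReal.sub_lt_self hcfin hc0 hminv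
      rw [hcdef] at hlt
      obtain ⟨A, hA⟩ := lt_iSup_iff.mp hlt
      obtain ⟨hPA, hνA⟩ := lt_iSup_iff.mp hA
      exact ⟨A, hPA, le_of_lt hνA⟩
  choose A hPA hνA using hseq
  set U : Set α := ⋃ m, A m with hUdef
  have hPU : P U := by
    refine ⟨MeasurableSet.iUnion (fun m => (hPA m).1), ?_⟩
    exact indicator_iUnion_aemeasurable (fun m => (hPA m).1) (fun m => (hPA m).2)
  have hνU : ∀ B, P B → ν B ≤ c := by
    intro B hB
    rw [hcdef]
    exact le_iSup₂ (f := fun (A : Set α) (_ : P A) => ν A) B hB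
  have hcU : ν U = c := by
    refine le_antisymm (hνU U hPU) ?_
    refine ENNReal.le_of_forall_pos_le_add fun ε hε hlt => ?_
    obtain ⟨m, hm⟩ := ENNReal.exists_inv_nat_lt (show ((ε : ℝ≥0∞)) ≠ 0 by exact_mod_cast hε.ne')
    have h1 : c - ((m : ℝ≥0∞))⁻¹ ≤ ν U := le_trans (hνA m) (measure_mono (Set.subset_iUnion A m))
    have h2 : c ≤ ν U + ((m : ℝ≥0∞))⁻¹ := tsub_le_iff_right.mp h1
    exact le_trans h2 (add_le_add_right hm.le _)
  refine ⟨U.indicator f, hPU.2, ?_, ?_⟩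
  · intro y
    by_cases hy : y ∈ U
    · simp [Set.indicator_of_mem hy]
    · simp [Set.indicator_of_notMem hy, abs_nonneg]
  · intro z
    by_cases hz : Integrable (fun y => K z y * f y) μ
    · have hKz : Measurable fun y => K z y := hK.comp (measurable_prodMk_left)
      set E : Set α := {y | K z y ≠ 0} with hEdef
      have hE : MeasurableSet E := (hKz (measurableSet_singleton 0)).compl
      have hfE : AEMeasurable (E.indicator f) μ := by
        have heq : E.indicator f = fun y => (K z y * f y) * (K z y)⁻¹ := by
          funext y
          by_cases h : K z y = 0
          · simp [Set.indicator_of_notMem, hEdef, h]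
          · rw [Set.indicator_of_mem (by simpa [hEdef] using h)]
            field_simp
        rw [heq]
        exact hz.aemeasurable.mul hKz.inv.aemeasurable
      have hPUE : P (U ∪ E) := ⟨hPU.1.union hE, indicator_union_aemeasurable hPU.1 hPU.2 hfE⟩
      have hν0 : ν (E \ U) = 0 := by
        have hdisj : Disjoint U (E \ U) := disjoint_sdiff_self_right
        have hu : ν (U ∪ E \ U) = ν U + ν (E \ U) := measure_union hdisj (hE.diff hPU.1)
        rw [Set.union_diff_self] at hu
        have h1 : ν (U ∪ E) ≤ ν U := by rw [hcU]; exact hνU _ hPUE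
        rw [hu] at h1
        exact le_zero_iff.mp ((ENNReal.add_le_add_iff_left (measure_ne_top ν U)).mp
          (by simpa using h1))
      have hμ0 : μ (E \ U) = 0 := hμν hν0
      have hae : ∀ᵐ y ∂μ, K z y * f y = K z y * U.indicator f y := by
        have : ∀ᵐ y ∂μ, y ∉ E \ U := measure_eq_zero_iff_ae_notMem.mp hμ0
        filter_upwards [this] with y hy
        by_cases hKy : K z y = 0
        · simp [hKy]
        · have hyE : y ∈ E := by simpa [hEdef] using hKy
          have hyU : y ∈ U := by
            by_contra hyU
            exact hy ⟨hyE, hyU⟩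
          rw [Set.indicator_of_mem hyU]
      rw [integral_congr_ae hae]
    · rw [integral_undef hz]
      simp

lemma schur_bound {μ : Measure α} [SFinite μ]
    {K : α → α → ℝ} (hK : Measurable fun q : α × α => K q.1 q.2)
    {pr qr : ℝ} (hpq : pr.HolderConjugate qr)
    {H : α → ℝ≥0∞} (hH : Measurable H) (hH' : ∀ᵐ z ∂μ, H z ≠ 0 ∧ H z ≠ ∞)
    {c1 c2 : ℝ≥0∞} (hc1 : c1 ≠ ∞) (hc2 : c2 ≠ ∞)
    (h1 : ∀ᵐ z ∂μ, ∫⁻ y, (‖K z y‖₊ : ℝ≥0∞) * H y ^ qr ∂μ ≤ c1 * H z ^ qr)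
    (h2 : ∀ᵐ y ∂μ, ∫⁻ z, (‖K z y‖₊ : ℝ≥0∞) * H z ^ pr ∂μ ≤ c2 * H y ^ pr)
    {f : α → ℝ} (hf : AEMeasurable f μ) :
    ∫⁻ z, (‖∫ y, K z y * f y ∂μ‖₊ : ℝ≥0∞) ^ pr ∂μ
      ≤ (c1 ^ (pr / qr) * c2) * ∫⁻ y, (‖f y‖₊ : ℝ≥0∞) ^ pr ∂μ := by
  have hpr0 : (0:ℝ) < pr := hpq.pos
  have hqr0 : (0:ℝ) < qr := hpq.symm.pos
  set g : α → α → ℝ≥0∞ := fun z y => (‖K z y‖₊ : ℝ≥0∞) with hgdef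
  set F : α → ℝ≥0∞ := fun y => (‖f y‖₊ : ℝ≥0∞) with hFdef
  have hgmeas : Measurable fun q : α × α => g q.1 q.2 := hK.enorm
  have hgz : ∀ z, Measurable (g z) := fun z => hgmeas.comp measurable_prodMk_left
  have hgy : ∀ y, Measurable (fun z => g z y) := fun y => hgmeas.comp measurable_prodMk_right
  have hF : AEMeasurable F μ := hf.enorm
  set I : α → ℝ≥0∞ := fun z => ∫⁻ y, (H y ^ (-pr) * F y ^ pr) * g z y ∂μ with hIdef
  have key : ∀ᵐ z ∂μ, (‖∫ y, K z y * f y ∂μ‖₊ : ℝ≥0∞) ^ pr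
      ≤ c1 ^ (pr / qr) * (H z ^ pr * I z) := by
    filter_upwards [h1, hH'] with z h1z hHz
    have step1 : (‖∫ y, K z y * f y ∂μ‖₊ : ℝ≥0∞) ≤ ∫⁻ y, g z y * F y ∂μ := by
      refine le_trans (enorm_integral_le_lintegral_enorm _) (le_of_eq ?_)
      refine lintegral_congr fun y => ?_
      rw [hgdef, hFdef]
      simp [nnnorm_mul, enorm_eq_nnnorm]
    set φ : α → ℝ≥0∞ := fun y => g z y ^ (1 / qr) * H y with hφdef
    set ψ : α → ℝ≥0∞ := fun y => g z y ^ (1 / pr) * (H y ^ (-(1:ℝ)) * F y) with hψdef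
    have hsum : 1 / qr + 1 / pr = 1 := by
      rw [one_div, one_div, add_comm]
      exact hpq.inv_add_inv_eq_one
    have hmul : ∀ᵐ y ∂μ, g z y * F y = φ y * ψ y := by
      filter_upwards [hH'] with y hy
      rcases eq_or_ne (g z y) 0 with hg0 | hg0
      · simp only [hφdef, hψdef, hg0]
        rw [ENNReal.zero_rpow_of_pos (by positivity : (0:ℝ) < 1 / qr),
          ENNReal.zero_rpow_of_pos (by positivity : (0:ℝ) < 1 / pr)]
        simp
      · have hgt : g z y ≠ ∞ := ENNReal.coe_ne_top
        have e1 : g z y ^ (1 / qr) * g z y ^ (1 / pr) = g z y := by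
          rw [← ENNReal.rpow_add _ _ hg0 hgt, hsum, ENNReal.rpow_one]
        have e2 : H y * (H y)⁻¹ = 1 := ENNReal.mul_inv_cancel hy.1 hy.2
        calc g z y * F y = (g z y ^ (1 / qr) * g z y ^ (1 / pr)) * ((H y * (H y)⁻¹) * F y) := by
              rw [e1, e2, one_mul]
          _ = φ y * ψ y := by
              rw [hφdef, hψdef]
              simp only [ENNReal.rpow_neg_one]
              ring
    have hφm : AEMeasurable φ μ :=
      (((hgz z).comp measurable_id).pow measurable_const).aemeasurable.mul hH.aemeasurable
    have hψm : AEMeasurable ψ μ := by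
      refine (((hgz z).pow measurable_const).aemeasurable.mul ?_)
      exact ((hH.pow measurable_const).aemeasurable.mul hF)
    have hHolder := ENNReal.lintegral_mul_le_Lp_mul_Lq μ hpq.symm hφm hψm
    have heq1 : ∫⁻ y, φ y ^ qr ∂μ = ∫⁻ y, g z y * H y ^ qr ∂μ := by
      refine lintegral_congr fun y => ?_
      rw [hφdef]
      rw [ENNReal.mul_rpow_of_nonneg _ _ hqr0.le, ← ENNReal.rpow_mul,
        one_div_mul_cancel hqr0.ne', ENNReal.rpow_one]
    have heq2 : ∫⁻ y, ψ y ^ pr ∂μ = I z := by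
      refine lintegral_congr fun y => ?_
      simp only [hψdef, hIdef]
      rw [ENNReal.mul_rpow_of_nonneg _ _ hpr0.le, ENNReal.mul_rpow_of_nonneg _ _ hpr0.le,
        ← ENNReal.rpow_mul, ← ENNReal.rpow_mul, one_div_mul_cancel hpr0.ne',
        ENNReal.rpow_one, neg_one_mul]
      ring
    have step2 : (∫⁻ y, g z y * F y ∂μ)
        ≤ (c1 * H z ^ qr) ^ (1 / qr) * (I z) ^ (1 / pr) := by
      calc ∫⁻ y, g z y * F y ∂μ = ∫⁻ y, φ y * ψ y ∂μ := lintegral_congr_ae hmul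
        _ ≤ (∫⁻ y, φ y ^ qr ∂μ) ^ (1 / qr) * (∫⁻ y, ψ y ^ pr ∂μ) ^ (1 / pr) := by
            simpa using hHolder
        _ ≤ (c1 * H z ^ qr) ^ (1 / qr) * (I z) ^ (1 / pr) := by
            rw [heq1, heq2]
            exact mul_le_mul_left (ENNReal.rpow_le_rpow h1z (by positivity)) _
    calc (‖∫ y, K z y * f y ∂μ‖₊ : ℝ≥0∞) ^ pr
        ≤ ((c1 * H z ^ qr) ^ (1 / qr) * (I z) ^ (1 / pr)) ^ pr :=
          ENNReal.rpow_le_rpow (le_trans step1 step2) hpr0.le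
      _ = (c1 ^ (1 / qr) * H z) ^ pr * I z := by
          rw [ENNReal.mul_rpow_of_nonneg _ _ hpr0.le, ← ENNReal.rpow_mul (I z),
            one_div_mul_cancel hpr0.ne', ENNReal.rpow_one,
            ENNReal.mul_rpow_of_nonneg c1 _ (by positivity), ← ENNReal.rpow_mul (H z),
            mul_one_div_cancel hqr0.ne', ENNReal.rpow_one]
      _ = c1 ^ (pr / qr) * (H z ^ pr * I z) := by
          rw [ENNReal.mul_rpow_of_nonneg _ _ hpr0.le, ← ENNReal.rpow_mul c1]
          rw [one_div_mul_eq_div]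
          ring
  have hQmeas : AEMeasurable (fun q : α × α =>
      (H q.2 ^ (-pr) * F q.2 ^ pr * g q.1 q.2) * H q.1 ^ pr) (μ.prod μ) := by
    have hsnd : AEMeasurable (fun q : α × α => F q.2) (μ.prod μ) :=
      hF.comp_quasiMeasurePreserving Measure.quasiMeasurePreserving_snd
    exact ((((hH.comp measurable_snd).pow measurable_const).aemeasurable.mul
      (hsnd.pow aemeasurable_const)).mul hgmeas.aemeasurable).mul
      ((hH.comp measurable_fst).pow measurable_const).aemeasurable
  calc ∫⁻ z, (‖∫ y, K z y * f y ∂μ‖₊ : ℝ≥0∞) ^ pr ∂μ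
      ≤ ∫⁻ z, c1 ^ (pr / qr) * (H z ^ pr * I z) ∂μ := lintegral_mono_ae key
    _ = c1 ^ (pr / qr) * ∫⁻ z, H z ^ pr * I z ∂μ :=
        lintegral_const_mul' _ _ (ENNReal.rpow_ne_top_of_nonneg (by positivity) hc1)
    _ = c1 ^ (pr / qr) * ∫⁻ z, ∫⁻ y, (H y ^ (-pr) * F y ^ pr * g z y) * H z ^ pr ∂μ ∂μ := by
        congr 1
        refine lintegral_congr_ae ?_
        filter_upwards [hH'] with z hz
        rw [hIdef, mul_comm]
        exact (lintegral_mul_const' _ _ (ENNReal.rpow_ne_top_of_nonneg hpr0.le hz.2)).symm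
    _ = c1 ^ (pr / qr) * ∫⁻ y, ∫⁻ z, (H y ^ (-pr) * F y ^ pr * g z y) * H z ^ pr ∂μ ∂μ := by
        congr 1
        exact lintegral_lintegral_swap hQmeas
    _ ≤ c1 ^ (pr / qr) * ∫⁻ y, c2 * F y ^ pr ∂μ := by
        refine mul_le_mul_right (lintegral_mono_ae ?_) _
        filter_upwards [h2, hH'] with y h2y hy
        have hrw : ∀ z, (H y ^ (-pr) * F y ^ pr * g z y) * H z ^ pr
            = (H y ^ (-pr) * F y ^ pr) * (g z y * H z ^ pr) := fun z => by ring
        calc ∫⁻ z, (H y ^ (-pr) * F y ^ pr * g z y) * H z ^ pr ∂μ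
            = (H y ^ (-pr) * F y ^ pr) * ∫⁻ z, g z y * H z ^ pr ∂μ := by
              simp only [hrw]
              exact lintegral_const_mul _ ((hgy y).mul (hH.pow measurable_const))
          _ ≤ (H y ^ (-pr) * F y ^ pr) * (c2 * H y ^ pr) := mul_le_mul_right h2y _
          _ = c2 * F y ^ pr * (H y ^ (-pr) * H y ^ pr) := by ring
          _ = c2 * F y ^ pr := by
              rw [ENNReal.rpow_neg, ENNReal.inv_mul_cancel, mul_one]
              · simp [ENNReal.rpow_eq_zero_iff, hy.1, hy.2]
              · exact ENNReal.rpow_ne_top_of_nonneg hpr0.le hy.2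
    _ = (c1 ^ (pr / qr) * c2) * ∫⁻ y, F y ^ pr ∂μ := by
        rw [lintegral_const_mul' _ _ hc2, mul_assoc]

lemma key1 {r x : ℝ} (hr : -1 < r) (hx : 0 < x) :
    ∫⁻ t in Set.Ioc (0:ℝ) x, ENNReal.ofReal (t ^ r)
      ≤ ENNReal.ofReal (x ^ (r + 1) / (r + 1)) := by
  have hInt : IntegrableOn (fun t : ℝ => t ^ r) (Set.Ioc 0 x) volume := by
    rw [← intervalIntegrable_iff_integrableOn_Ioc_of_le hx.le]
    exact intervalIntegral.intervalIntegrable_rpow' hr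
  have hnn : 0 ≤ᵐ[volume.restrict (Set.Ioc 0 x)] fun t : ℝ => t ^ r := by
    filter_upwards [ae_restrict_mem measurableSet_Ioc] with t ht
    exact Real.rpow_nonneg ht.1.le r
  rw [← ofReal_integral_eq_lintegral_ofReal hInt hnn]
  refine ENNReal.ofReal_le_ofReal (le_of_eq ?_)
  rw [← intervalIntegral.integral_of_le hx.le]
  rw [integral_rpow (Or.inl hr)]
  rw [Real.zero_rpow (by linarith : r + 1 ≠ 0)]
  ring

lemma key2 {e s : ℝ} (he : e < -1) (hs : 0 < s) (hs1 : s ≤ 1) :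
    ∫⁻ t in Set.Icc s 1, ENNReal.ofReal (t ^ e)
      ≤ ENNReal.ofReal (s ^ (e + 1) / (-(e + 1))) := by
  have hmem : (0:ℝ) ∉ Set.uIcc s 1 := Set.notMem_uIcc_of_lt hs zero_lt_one
  have hInt : IntegrableOn (fun t : ℝ => t ^ e) (Set.Ioc s 1) volume := by
    rw [← intervalIntegrable_iff_integrableOn_Ioc_of_le hs1]
    exact intervalIntegral.intervalIntegrable_rpow (Or.inr hmem)
  have hres : volume.restrict (Set.Icc s 1) = volume.restrict (Set.Ioc s 1) :=
    (Measure.restrict_congr_set Ioc_ae_eq_Icc).symm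
  rw [hres]
  have hnn : 0 ≤ᵐ[volume.restrict (Set.Ioc s 1)] fun t : ℝ => t ^ e := by
    filter_upwards [ae_restrict_mem measurableSet_Ioc] with t ht
    exact Real.rpow_nonneg (lt_trans hs ht.1).le e
  rw [← ofReal_integral_eq_lintegral_ofReal hInt hnn]
  refine ENNReal.ofReal_le_ofReal ?_
  rw [← intervalIntegral.integral_of_le hs1, integral_rpow (Or.inr ⟨by linarith, hmem⟩),
    Real.one_rpow]
  have hB : 0 < -(e + 1) := by linarith
  have h1 : (1 - s ^ (e + 1)) / (e + 1) = (s ^ (e + 1) - 1) / (-(e + 1)) := by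
    rw [div_eq_div_iff (by linarith) (by linarith)]
    ring
  rw [h1]
  have h2 : s ^ (e + 1) - 1 ≤ s ^ (e + 1) := by linarith
  exact div_le_div_of_nonneg_right h2 hB.le |>.trans (le_refl _)

variable {Y : Type*} [MeasurableSpace Y]

lemma acMeasure_ae_fst (σ : Measure Y) [SFinite σ] (n : ℕ) :
    ∀ᵐ z ∂(acMeasure n σ), z.1 ∈ Set.Ioo (0:ℝ) 1 := by
  rw [ae_iff]
  have hset : {z : ℝ × Y | ¬ z.1 ∈ Set.Ioo (0:ℝ) 1} = (Set.Ioo (0:ℝ) 1)ᶜ ×ˢ Set.univ := by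
    ext z; simp [Set.mem_prod]
  rw [hset, acMeasure, Measure.prod_prod]
  have hρ : (((volume : Measure ℝ).restrict (Set.Ioo (0:ℝ) 1)).withDensity
      (fun x => ENNReal.ofReal (x ^ (-(n:ℝ) - 1)))) ((Set.Ioo (0:ℝ) 1)ᶜ) = 0 := by
    rw [withDensity_apply _ measurableSet_Ioo.compl,
      Measure.restrict_restrict measurableSet_Ioo.compl, Set.compl_inter_self,
      Measure.restrict_empty, lintegral_zero_measure]
  rw [hρ, zero_mul]

lemma acMeasure_lintegral_fst (σ : Measure Y) [IsFiniteMeasure σ] (n : ℕ)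
    {Φ : ℝ → ℝ≥0∞} (hΦ : Measurable Φ) :
    ∫⁻ y, Φ y.1 ∂(acMeasure n σ)
      = σ Set.univ * ∫⁻ x in Set.Ioo (0:ℝ) 1, ENNReal.ofReal (x ^ (-(n:ℝ) - 1)) * Φ x := by
  have hswap := MeasureTheory.lintegral_prod (μ := ((volume : Measure ℝ).restrict (Set.Ioo (0:ℝ) 1)).withDensity
      (fun x => ENNReal.ofReal (x ^ (-(n:ℝ) - 1)))) (ν := σ)
    (fun y : ℝ × Y => Φ y.1) ((hΦ.comp measurable_fst).aemeasurable)
  rw [acMeasure, hswap]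
  simp only [lintegral_const]
  have hwmeas : Measurable (fun x : ℝ => ENNReal.ofReal (x ^ (-(n:ℝ) - 1))) := by
    apply Measurable.ennreal_ofReal
    exact measurable_id.pow measurable_const
  rw [lintegral_mul_const _ hΦ,
    lintegral_withDensity_eq_lintegral_mul _ hwmeas hΦ, mul_comm]
  rfl

end Stmt15Aux

open Stmt15Aux

/-- Schur-type estimate: a kernel supported in `{s = x/x' ≥ 1}` and bounded there
by `x'^{n+δ} s^{α+δ}` with `α = 3 - m'`, `δ > 0`, defines an operator bounded on
`L^p` for `1 < p < n/α = n/(3-m')`. -/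
theorem stmt15 {Y : Type*} [MeasurableSpace Y] (σ : Measure Y) [IsFiniteMeasure σ]
    (n : ℕ) (hn : 3 ≤ n) (m' δ : ℝ) (hm : 0 ≤ m') (hm2 : m' ≤ 2) (hδ : 0 < δ)
    (K : (ℝ × Y) → (ℝ × Y) → ℝ)
    (hmeas : Measurable (fun p : (ℝ × Y) × (ℝ × Y) => K p.1 p.2))
    (hsupp : ∀ p q : ℝ × Y, p.1 < q.1 → K p q = 0)
    (hbound : ∀ p q : ℝ × Y, p.1 ∈ Set.Ioo (0:ℝ) 1 → q.1 ∈ Set.Ioo (0:ℝ) 1 →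
      q.1 ≤ p.1 →
      |K p q| ≤ q.1 ^ ((n:ℝ) + δ) * (p.1 / q.1) ^ ((3 - m') + δ)) :
    ∀ p : ℝ, 1 < p → p < n / (3 - m') →
      ∃ C : ℝ, 0 ≤ C ∧ ∀ f : ℝ × Y → ℝ,
        eLpNorm (fun z => ∫ z', K z z' * f z' ∂(acMeasure n σ))
            (ENNReal.ofReal p) (acMeasure n σ)
          ≤ ENNReal.ofReal C * eLpNorm f (ENNReal.ofReal p) (acMeasure n σ) := by
  intro p hp1 hp2
  classical
  haveI hsf : SFinite (acMeasure n σ) := by unfold acMeasure; infer_instance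
  have hn3 : (3:ℝ) ≤ (n:ℝ) := by exact_mod_cast hn
  set a : ℝ := 3 - m' with hadef
  clear_value a
  have ha1 : 1 ≤ a := by rw [hadef]; linarith
  have ha0 : 0 < a := by linarith
  have hp0 : 0 < p := lt_trans one_pos hp1
  have hap : a * p < n := by
    have h := (lt_div_iff₀ ha0).mp hp2
    rw [mul_comm] at h
    exact h
  set δ₀ : ℝ := min δ (((n:ℝ) - a * p) / 2) with hd0def
  clear_value δ₀
  have hδ₀pos : 0 < δ₀ := by
    rw [hd0def]
    exact lt_min hδ (by linarith)
  have hδ₀δ : δ₀ ≤ δ := by rw [hd0def]; exact min_le_left _ _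
  have hδ₀half : δ₀ ≤ ((n:ℝ) - a * p) / 2 := by rw [hd0def]; exact min_le_right _ _
  have hpq : p.HolderConjugate (p / (p - 1)) := Real.HolderConjugate.conjExponent hp1
  set q : ℝ := p / (p - 1) with hqdef
  clear_value q
  have hq0 : 0 < q := hpq.symm.pos
  have hABlt : a / q < ((n:ℝ) - a - δ₀) / p := by
    have h1 : a / q = a * (p - 1) / p := by
      rw [hqdef]
      field_simp
    rw [h1, div_lt_div_iff₀ hp0 hp0]
    have hkey : a * (p - 1) < (n:ℝ) - a - δ₀ := by
      have hexp : a * (p - 1) = a * p - a := by ring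
      linarith
    exact mul_lt_mul_of_pos_right hkey hp0
  set cc : ℝ := (a / q + ((n:ℝ) - a - δ₀) / p) / 2 with hccdef
  clear_value cc
  have hcclt1 : a / q < cc := by rw [hccdef]; linarith
  have hcclt2 : cc < ((n:ℝ) - a - δ₀) / p := by rw [hccdef]; linarith
  have hccq : a < cc * q := (div_lt_iff₀ hq0).mp hcclt1
  have hccp : cc * p < (n:ℝ) - a - δ₀ := (lt_div_iff₀ hp0).mp hcclt2
  have hcc0 : 0 < cc := lt_trans (div_pos ha0 hq0) hcclt1
  set r1 : ℝ := cc * q - a - 1 with hr1def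
  clear_value r1
  have hr1 : -1 < r1 := by rw [hr1def]; linarith
  set e2 : ℝ := a + δ₀ + cc * p - ((n:ℝ) + 1) with he2def
  clear_value e2
  have he2 : e2 < -1 := by rw [he2def]; linarith
  -- the weight
  set H : ℝ × Y → ℝ≥0∞ := fun z => ENNReal.ofReal (z.1 ^ cc) with hHdef
  have hH : Measurable H := (measurable_fst.pow measurable_const).ennreal_ofReal
  have haefst : ∀ᵐ z ∂(acMeasure n σ), z.1 ∈ Set.Ioo (0:ℝ) 1 := acMeasure_ae_fst σ n
  have hH' : ∀ᵐ z ∂(acMeasure n σ), H z ≠ 0 ∧ H z ≠ ∞ := by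
    filter_upwards [haefst] with z hz
    refine ⟨?_, ENNReal.ofReal_ne_top⟩
    exact ne_of_gt (ENNReal.ofReal_pos.mpr (Real.rpow_pos_of_pos hz.1 cc))
  -- improved kernel bound
  have hbound' : ∀ z y : ℝ × Y, z.1 ∈ Set.Ioo (0:ℝ) 1 → y.1 ∈ Set.Ioo (0:ℝ) 1 → y.1 ≤ z.1 →
      |K z y| ≤ y.1 ^ ((n:ℝ) + δ₀) * (z.1 / y.1) ^ (a + δ₀) := by
    intro z y hz hy hle
    have h0 := hbound z y hz hy hle
    have ht0 : 0 < y.1 := hy.1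
    have hx0 : 0 < z.1 := hz.1
    have hx1 : z.1 < 1 := hz.2
    have hdd : 0 ≤ δ - δ₀ := by linarith
    have e1 : y.1 ^ ((n:ℝ) + δ) = y.1 ^ ((n:ℝ) + δ₀) * y.1 ^ (δ - δ₀) := by
      rw [← Real.rpow_add ht0]; congr 1; ring
    have e2' : (z.1 / y.1) ^ (a + δ) = (z.1 / y.1) ^ (a + δ₀) * (z.1 / y.1) ^ (δ - δ₀) := by
      rw [← Real.rpow_add (div_pos hx0 ht0)]; congr 1; ring
    have e3 : y.1 ^ (δ - δ₀) * (z.1 / y.1) ^ (δ - δ₀) = z.1 ^ (δ - δ₀) := by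
      rw [← Real.mul_rpow ht0.le (div_pos hx0 ht0).le]
      congr 1
      field_simp
    have hsplit : y.1 ^ ((n:ℝ) + δ) * (z.1 / y.1) ^ (a + δ)
        = (y.1 ^ ((n:ℝ) + δ₀) * (z.1 / y.1) ^ (a + δ₀)) * z.1 ^ (δ - δ₀) := by
      calc y.1 ^ ((n:ℝ) + δ) * (z.1 / y.1) ^ (a + δ)
          = (y.1 ^ ((n:ℝ) + δ₀) * (z.1 / y.1) ^ (a + δ₀))
            * (y.1 ^ (δ - δ₀) * (z.1 / y.1) ^ (δ - δ₀)) := by rw [e1, e2']; ring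
        _ = (y.1 ^ ((n:ℝ) + δ₀) * (z.1 / y.1) ^ (a + δ₀)) * z.1 ^ (δ - δ₀) := by rw [e3]
    have hz1 : z.1 ^ (δ - δ₀) ≤ 1 := Real.rpow_le_one hx0.le hx1.le hdd
    calc |K z y| ≤ y.1 ^ ((n:ℝ) + δ) * (z.1 / y.1) ^ (a + δ) := h0
      _ = (y.1 ^ ((n:ℝ) + δ₀) * (z.1 / y.1) ^ (a + δ₀)) * z.1 ^ (δ - δ₀) := hsplit
      _ ≤ (y.1 ^ ((n:ℝ) + δ₀) * (z.1 / y.1) ^ (a + δ₀)) * 1 := by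
          refine mul_le_mul_of_nonneg_left hz1 ?_
          positivity
      _ = y.1 ^ ((n:ℝ) + δ₀) * (z.1 / y.1) ^ (a + δ₀) := mul_one _
  -- the constants
  set c1 : ℝ≥0∞ := σ Set.univ * ENNReal.ofReal (1 / (cc * q - a)) with hc1def
  have hc1top : c1 ≠ ∞ := ENNReal.mul_ne_top (measure_ne_top σ _) ENNReal.ofReal_ne_top
  set c2 : ℝ≥0∞ := σ Set.univ * ENNReal.ofReal (1 / (-(e2 + 1))) with hc2def
  have hc2top : c2 ≠ ∞ := ENNReal.mul_ne_top (measure_ne_top σ _) ENNReal.ofReal_ne_top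
  -- rpow for H
  have hHrpow : ∀ (w : ℝ × Y) (u : ℝ), 0 < w.1 → 0 < u → H w ^ u = ENNReal.ofReal (w.1 ^ (cc * u)) := by
    intro w u hw hu
    rw [hHdef]
    dsimp only
    rw [ENNReal.ofReal_rpow_of_nonneg (Real.rpow_nonneg hw.le cc) hu.le, ← Real.rpow_mul hw.le]
  -- the first Schur condition
  have h1 : ∀ᵐ z ∂(acMeasure n σ), ∫⁻ y, (‖K z y‖₊ : ℝ≥0∞) * H y ^ q ∂(acMeasure n σ)
      ≤ c1 * H z ^ q := by
    filter_upwards [haefst] with z hz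
    have hx0 : 0 < z.1 := hz.1
    have hx1 : z.1 < 1 := hz.2
    set Φ : ℝ → ℝ≥0∞ := fun t =>
      ENNReal.ofReal (t ^ ((n:ℝ) + 1)) *
        (Set.Ioc (0:ℝ) z.1).indicator
          (fun t => ENNReal.ofReal (z.1 ^ (a + δ₀) * t ^ r1)) t with hΦdef
    have hΦmeas : Measurable Φ := by
      refine ((measurable_id.pow measurable_const).ennreal_ofReal).mul ?_
      exact ((measurable_const.mul (measurable_id.pow measurable_const)).ennreal_ofReal).indicator
        measurableSet_Ioc
    have hpoint : ∀ᵐ y ∂(acMeasure n σ), (‖K z y‖₊ : ℝ≥0∞) * H y ^ q ≤ Φ y.1 := by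
      filter_upwards [haefst] with y hy
      have ht0 : 0 < y.1 := hy.1
      rw [← enorm_eq_nnnorm, Real.enorm_eq_ofReal_abs, hHrpow y q ht0 hq0]
      by_cases hcase : y.1 ≤ z.1
      · have hmem : y.1 ∈ Set.Ioc (0:ℝ) z.1 := ⟨ht0, hcase⟩
        rw [hΦdef]
        dsimp only
        rw [Set.indicator_of_mem hmem]
        rw [← ENNReal.ofReal_mul (abs_nonneg _),
          ← ENNReal.ofReal_mul (Real.rpow_nonneg ht0.le _)]
        refine ENNReal.ofReal_le_ofReal ?_
        have hb := hbound' z y hz hy hcase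
        have hdiv : (z.1 / y.1) ^ (a + δ₀) = z.1 ^ (a + δ₀) * y.1 ^ (-(a + δ₀)) := by
          rw [Real.div_rpow hx0.le ht0.le, Real.rpow_neg ht0.le, div_eq_mul_inv]
        have hid : y.1 ^ ((n:ℝ) + δ₀) * (z.1 / y.1) ^ (a + δ₀) * y.1 ^ (cc * q)
            = y.1 ^ ((n:ℝ) + 1) * (z.1 ^ (a + δ₀) * y.1 ^ r1) := by
          rw [hdiv]
          rw [show y.1 ^ ((n:ℝ) + δ₀) * (z.1 ^ (a + δ₀) * y.1 ^ (-(a + δ₀))) * y.1 ^ (cc * q)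
              = z.1 ^ (a + δ₀) * (y.1 ^ ((n:ℝ) + δ₀) * y.1 ^ (-(a + δ₀)) * y.1 ^ (cc * q))
              from by ring,
            show y.1 ^ ((n:ℝ) + 1) * (z.1 ^ (a + δ₀) * y.1 ^ r1)
              = z.1 ^ (a + δ₀) * (y.1 ^ ((n:ℝ) + 1) * y.1 ^ r1) from by ring,
            ← Real.rpow_add ht0, ← Real.rpow_add ht0, ← Real.rpow_add ht0]
          congr 1
          rw [hr1def]; ring
        calc |K z y| * y.1 ^ (cc * q)
            ≤ (y.1 ^ ((n:ℝ) + δ₀) * (z.1 / y.1) ^ (a + δ₀)) * y.1 ^ (cc * q) :=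
              mul_le_mul_of_nonneg_right hb (Real.rpow_nonneg ht0.le _)
          _ = y.1 ^ ((n:ℝ) + 1) * (z.1 ^ (a + δ₀) * y.1 ^ r1) := hid
      · have hK0 : K z y = 0 := hsupp z y (lt_of_not_ge hcase)
        simp [hK0]
    have hsimp : ∀ᵐ t ∂(volume.restrict (Set.Ioo (0:ℝ) 1)),
        ENNReal.ofReal (t ^ (-(n:ℝ) - 1)) * Φ t
          = (Set.Ioc (0:ℝ) z.1).indicator
              (fun t => ENNReal.ofReal (z.1 ^ (a + δ₀) * t ^ r1)) t := by
      filter_upwards [ae_restrict_mem measurableSet_Ioo] with t ht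
      have ht0 : 0 < t := ht.1
      rw [hΦdef]
      dsimp only
      rw [← mul_assoc, ← ENNReal.ofReal_mul (Real.rpow_nonneg ht0.le _), ← Real.rpow_add ht0,
        show (-(n:ℝ) - 1) + ((n:ℝ) + 1) = 0 from by ring, Real.rpow_zero, ENNReal.ofReal_one,
        one_mul]
    have hintle : (∫⁻ t in Set.Ioo (0:ℝ) 1, (Set.Ioc (0:ℝ) z.1).indicator
          (fun t => ENNReal.ofReal (z.1 ^ (a + δ₀) * t ^ r1)) t)
        ≤ ENNReal.ofReal (z.1 ^ (a + δ₀)) * ENNReal.ofReal (z.1 ^ (r1 + 1) / (r1 + 1)) := by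
      rw [lintegral_indicator measurableSet_Ioc, Measure.restrict_restrict measurableSet_Ioc]
      calc ∫⁻ t in Set.Ioc (0:ℝ) z.1 ∩ Set.Ioo (0:ℝ) 1,
              ENNReal.ofReal (z.1 ^ (a + δ₀) * t ^ r1) ∂volume
          ≤ ∫⁻ t in Set.Ioc (0:ℝ) z.1, ENNReal.ofReal (z.1 ^ (a + δ₀) * t ^ r1) ∂volume :=
            lintegral_mono_set Set.inter_subset_left
        _ = ENNReal.ofReal (z.1 ^ (a + δ₀))
              * ∫⁻ t in Set.Ioc (0:ℝ) z.1, ENNReal.ofReal (t ^ r1) ∂volume := by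
            rw [← lintegral_const_mul' _ _ ENNReal.ofReal_ne_top]
            refine lintegral_congr fun t => ?_
            rw [← ENNReal.ofReal_mul (Real.rpow_nonneg hx0.le _)]
        _ ≤ _ := mul_le_mul_right (key1 hr1 hx0) _
    have hfinal : ENNReal.ofReal (z.1 ^ (a + δ₀)) * ENNReal.ofReal (z.1 ^ (r1 + 1) / (r1 + 1))
        ≤ ENNReal.ofReal (1 / (cc * q - a)) * H z ^ q := by
      have hD0 : (0:ℝ) ≤ 1 / (cc * q - a) := one_div_nonneg.mpr (by linarith)
      rw [hHrpow z q hx0 hq0, ← ENNReal.ofReal_mul (Real.rpow_nonneg hx0.le _),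
        ← ENNReal.ofReal_mul hD0]
      refine ENNReal.ofReal_le_ofReal ?_
      have hr1x : r1 + 1 = cc * q - a := by rw [hr1def]; ring
      have hD : 0 < cc * q - a := by linarith
      have hxx : z.1 ^ (a + δ₀) * z.1 ^ (cc * q - a) = z.1 ^ (cc * q) * z.1 ^ δ₀ := by
        rw [← Real.rpow_add hx0, ← Real.rpow_add hx0]; congr 1; ring
      have hle1 : z.1 ^ δ₀ ≤ 1 := Real.rpow_le_one hx0.le hx1.le hδ₀pos.le
      rw [hr1x]
      calc z.1 ^ (a + δ₀) * (z.1 ^ (cc * q - a) / (cc * q - a))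
          = (z.1 ^ (cc * q) * z.1 ^ δ₀) * (cc * q - a)⁻¹ := by
            rw [div_eq_mul_inv, ← mul_assoc, hxx]
        _ ≤ (z.1 ^ (cc * q) * 1) * (cc * q - a)⁻¹ := by
            refine mul_le_mul_of_nonneg_right ?_ (inv_nonneg.mpr hD.le)
            exact mul_le_mul_of_nonneg_left hle1 (Real.rpow_nonneg hx0.le _)
        _ = 1 / (cc * q - a) * z.1 ^ (cc * q) := by rw [mul_one]; ring
    calc ∫⁻ y, (‖K z y‖₊ : ℝ≥0∞) * H y ^ q ∂(acMeasure n σ)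
        ≤ ∫⁻ y, Φ y.1 ∂(acMeasure n σ) := lintegral_mono_ae hpoint
      _ = σ Set.univ * ∫⁻ t in Set.Ioo (0:ℝ) 1, ENNReal.ofReal (t ^ (-(n:ℝ) - 1)) * Φ t :=
          acMeasure_lintegral_fst σ n hΦmeas
      _ = σ Set.univ * ∫⁻ t in Set.Ioo (0:ℝ) 1, (Set.Ioc (0:ℝ) z.1).indicator
            (fun t => ENNReal.ofReal (z.1 ^ (a + δ₀) * t ^ r1)) t := by
          rw [lintegral_congr_ae hsimp]
      _ ≤ σ Set.univ * (ENNReal.ofReal (z.1 ^ (a + δ₀))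
            * ENNReal.ofReal (z.1 ^ (r1 + 1) / (r1 + 1))) := mul_le_mul_right hintle _
      _ ≤ σ Set.univ * (ENNReal.ofReal (1 / (cc * q - a)) * H z ^ q) :=
          mul_le_mul_right hfinal _
      _ = c1 * H z ^ q := by rw [hc1def, mul_assoc]
  -- the second Schur condition
  have h2 : ∀ᵐ y ∂(acMeasure n σ), ∫⁻ z, (‖K z y‖₊ : ℝ≥0∞) * H z ^ p ∂(acMeasure n σ)
      ≤ c2 * H y ^ p := by
    filter_upwards [haefst] with y hy
    have hs0 : 0 < y.1 := hy.1
    have hs1 : y.1 < 1 := hy.2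
    set Φ : ℝ → ℝ≥0∞ := fun t =>
      ENNReal.ofReal (t ^ ((n:ℝ) + 1)) *
        (Set.Icc y.1 1).indicator
          (fun t => ENNReal.ofReal (y.1 ^ ((n:ℝ) - a) * t ^ e2)) t with hΦdef
    have hΦmeas : Measurable Φ := by
      refine ((measurable_id.pow measurable_const).ennreal_ofReal).mul ?_
      exact ((measurable_const.mul (measurable_id.pow measurable_const)).ennreal_ofReal).indicator
        measurableSet_Icc
    have hpoint : ∀ᵐ z ∂(acMeasure n σ), (‖K z y‖₊ : ℝ≥0∞) * H z ^ p ≤ Φ z.1 := by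
      filter_upwards [haefst] with z hz
      have ht0 : 0 < z.1 := hz.1
      rw [← enorm_eq_nnnorm, Real.enorm_eq_ofReal_abs, hHrpow z p ht0 hp0]
      by_cases hcase : y.1 ≤ z.1
      · have hmem : z.1 ∈ Set.Icc y.1 1 := ⟨hcase, hz.2.le⟩
        rw [hΦdef]
        dsimp only
        rw [Set.indicator_of_mem hmem]
        rw [← ENNReal.ofReal_mul (abs_nonneg _),
          ← ENNReal.ofReal_mul (Real.rpow_nonneg ht0.le _)]
        refine ENNReal.ofReal_le_ofReal ?_
        have hb := hbound' z y hz hy hcase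
        have hdiv : (z.1 / y.1) ^ (a + δ₀) = z.1 ^ (a + δ₀) * y.1 ^ (-(a + δ₀)) := by
          rw [Real.div_rpow ht0.le hs0.le, Real.rpow_neg hs0.le, div_eq_mul_inv]
        have hid : y.1 ^ ((n:ℝ) + δ₀) * (z.1 / y.1) ^ (a + δ₀) * z.1 ^ (cc * p)
            = z.1 ^ ((n:ℝ) + 1) * (y.1 ^ ((n:ℝ) - a) * z.1 ^ e2) := by
          rw [hdiv]
          rw [show y.1 ^ ((n:ℝ) + δ₀) * (z.1 ^ (a + δ₀) * y.1 ^ (-(a + δ₀))) * z.1 ^ (cc * p)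
              = (y.1 ^ ((n:ℝ) + δ₀) * y.1 ^ (-(a + δ₀))) * (z.1 ^ (a + δ₀) * z.1 ^ (cc * p))
              from by ring,
            show z.1 ^ ((n:ℝ) + 1) * (y.1 ^ ((n:ℝ) - a) * z.1 ^ e2)
              = y.1 ^ ((n:ℝ) - a) * (z.1 ^ ((n:ℝ) + 1) * z.1 ^ e2) from by ring,
            ← Real.rpow_add hs0, ← Real.rpow_add ht0, ← Real.rpow_add ht0]
          rw [show (n:ℝ) + δ₀ + -(a + δ₀) = (n:ℝ) - a from by ring]
          congr 1
          rw [he2def]; ring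
        calc |K z y| * z.1 ^ (cc * p)
            ≤ (y.1 ^ ((n:ℝ) + δ₀) * (z.1 / y.1) ^ (a + δ₀)) * z.1 ^ (cc * p) :=
              mul_le_mul_of_nonneg_right hb (Real.rpow_nonneg ht0.le _)
          _ = z.1 ^ ((n:ℝ) + 1) * (y.1 ^ ((n:ℝ) - a) * z.1 ^ e2) := hid
      · have hK0 : K z y = 0 := hsupp z y (lt_of_not_ge hcase)
        simp [hK0]
    have hsimp : ∀ᵐ t ∂(volume.restrict (Set.Ioo (0:ℝ) 1)),
        ENNReal.ofReal (t ^ (-(n:ℝ) - 1)) * Φ t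
          = (Set.Icc y.1 1).indicator
              (fun t => ENNReal.ofReal (y.1 ^ ((n:ℝ) - a) * t ^ e2)) t := by
      filter_upwards [ae_restrict_mem measurableSet_Ioo] with t ht
      have ht0 : 0 < t := ht.1
      rw [hΦdef]
      dsimp only
      rw [← mul_assoc, ← ENNReal.ofReal_mul (Real.rpow_nonneg ht0.le _), ← Real.rpow_add ht0,
        show (-(n:ℝ) - 1) + ((n:ℝ) + 1) = 0 from by ring, Real.rpow_zero, ENNReal.ofReal_one,
        one_mul]
    have hintle : (∫⁻ t in Set.Ioo (0:ℝ) 1, (Set.Icc y.1 1).indicator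
          (fun t => ENNReal.ofReal (y.1 ^ ((n:ℝ) - a) * t ^ e2)) t)
        ≤ ENNReal.ofReal (y.1 ^ ((n:ℝ) - a))
            * ENNReal.ofReal (y.1 ^ (e2 + 1) / (-(e2 + 1))) := by
      rw [lintegral_indicator measurableSet_Icc, Measure.restrict_restrict measurableSet_Icc]
      calc ∫⁻ t in Set.Icc y.1 1 ∩ Set.Ioo (0:ℝ) 1,
              ENNReal.ofReal (y.1 ^ ((n:ℝ) - a) * t ^ e2) ∂volume
          ≤ ∫⁻ t in Set.Icc y.1 1, ENNReal.ofReal (y.1 ^ ((n:ℝ) - a) * t ^ e2) ∂volume :=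
            lintegral_mono_set Set.inter_subset_left
        _ = ENNReal.ofReal (y.1 ^ ((n:ℝ) - a))
              * ∫⁻ t in Set.Icc y.1 1, ENNReal.ofReal (t ^ e2) ∂volume := by
            rw [← lintegral_const_mul' _ _ ENNReal.ofReal_ne_top]
            refine lintegral_congr fun t => ?_
            rw [← ENNReal.ofReal_mul (Real.rpow_nonneg hs0.le _)]
        _ ≤ _ := mul_le_mul_right (key2 he2 hs0 hs1.le) _
    have hfinal : ENNReal.ofReal (y.1 ^ ((n:ℝ) - a))
          * ENNReal.ofReal (y.1 ^ (e2 + 1) / (-(e2 + 1)))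
        ≤ ENNReal.ofReal (1 / (-(e2 + 1))) * H y ^ p := by
      have hD0 : (0:ℝ) ≤ 1 / (-(e2 + 1)) := one_div_nonneg.mpr (by linarith)
      rw [hHrpow y p hs0 hp0, ← ENNReal.ofReal_mul (Real.rpow_nonneg hs0.le _),
        ← ENNReal.ofReal_mul hD0]
      refine ENNReal.ofReal_le_ofReal ?_
      have hD : 0 < -(e2 + 1) := by linarith
      have hxx : y.1 ^ ((n:ℝ) - a) * y.1 ^ (e2 + 1) = y.1 ^ (cc * p) * y.1 ^ δ₀ := by
        rw [← Real.rpow_add hs0, ← Real.rpow_add hs0]; congr 1; rw [he2def]; ring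
      have hle1 : y.1 ^ δ₀ ≤ 1 := Real.rpow_le_one hs0.le hs1.le hδ₀pos.le
      calc y.1 ^ ((n:ℝ) - a) * (y.1 ^ (e2 + 1) / (-(e2 + 1)))
          = (y.1 ^ (cc * p) * y.1 ^ δ₀) * (-(e2 + 1))⁻¹ := by
            rw [div_eq_mul_inv, ← mul_assoc, hxx]
        _ ≤ (y.1 ^ (cc * p) * 1) * (-(e2 + 1))⁻¹ := by
            refine mul_le_mul_of_nonneg_right ?_ (inv_nonneg.mpr hD.le)
            exact mul_le_mul_of_nonneg_left hle1 (Real.rpow_nonneg hs0.le _)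
        _ = 1 / (-(e2 + 1)) * y.1 ^ (cc * p) := by rw [mul_one]; ring
    calc ∫⁻ z, (‖K z y‖₊ : ℝ≥0∞) * H z ^ p ∂(acMeasure n σ)
        ≤ ∫⁻ z, Φ z.1 ∂(acMeasure n σ) := lintegral_mono_ae hpoint
      _ = σ Set.univ * ∫⁻ t in Set.Ioo (0:ℝ) 1, ENNReal.ofReal (t ^ (-(n:ℝ) - 1)) * Φ t :=
          acMeasure_lintegral_fst σ n hΦmeas
      _ = σ Set.univ * ∫⁻ t in Set.Ioo (0:ℝ) 1, (Set.Icc y.1 1).indicator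
            (fun t => ENNReal.ofReal (y.1 ^ ((n:ℝ) - a) * t ^ e2)) t := by
          rw [lintegral_congr_ae hsimp]
      _ ≤ σ Set.univ * (ENNReal.ofReal (y.1 ^ ((n:ℝ) - a))
            * ENNReal.ofReal (y.1 ^ (e2 + 1) / (-(e2 + 1)))) := mul_le_mul_right hintle _
      _ ≤ σ Set.univ * (ENNReal.ofReal (1 / (-(e2 + 1))) * H y ^ p) :=
          mul_le_mul_right hfinal _
      _ = c2 * H y ^ p := by rw [hc2def, mul_assoc]
  -- final constant
  set D : ℝ≥0∞ := (c1 ^ (p / q) * c2) ^ (1 / p) with hDdef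
  have hDtop : D ≠ ∞ := by
    refine ENNReal.rpow_ne_top_of_nonneg (by positivity) ?_
    exact ENNReal.mul_ne_top (ENNReal.rpow_ne_top_of_nonneg (by positivity) hc1top) hc2top
  refine ⟨D.toReal, ENNReal.toReal_nonneg, ?_⟩
  intro f
  rw [ENNReal.ofReal_toReal hDtop]
  have hpne0 : (ENNReal.ofReal p) ≠ 0 := by
    simp only [ne_eq, ENNReal.ofReal_eq_zero, not_le]
    exact hp0
  rw [eLpNorm_eq_lintegral_rpow_enorm_toReal hpne0 ENNReal.ofReal_ne_top,
    eLpNorm_eq_lintegral_rpow_enorm_toReal hpne0 ENNReal.ofReal_ne_top,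
    ENNReal.toReal_ofReal hp0.le]
  obtain ⟨g, hgaem, hgle, hgT⟩ := exists_aemeasurable_reduction (μ := acMeasure n σ) hmeas f
  have hstep1 : (∫⁻ z, (‖∫ y, K z y * f y ∂(acMeasure n σ)‖₊ : ℝ≥0∞) ^ p ∂(acMeasure n σ))
      ≤ ∫⁻ z, (‖∫ y, K z y * g y ∂(acMeasure n σ)‖₊ : ℝ≥0∞) ^ p ∂(acMeasure n σ) :=
    lintegral_mono fun z => ENNReal.rpow_le_rpow (hgT z) hp0.le
  have hschur := schur_bound hmeas hpq hH hH' hc1top hc2top h1 h2 hgaem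
  have hstep3 : (∫⁻ y, (‖g y‖₊ : ℝ≥0∞) ^ p ∂(acMeasure n σ))
      ≤ ∫⁻ y, (‖f y‖₊ : ℝ≥0∞) ^ p ∂(acMeasure n σ) := by
    refine lintegral_mono fun y => ENNReal.rpow_le_rpow ?_ hp0.le
    rw [← enorm_eq_nnnorm, ← enorm_eq_nnnorm, Real.enorm_eq_ofReal_abs, Real.enorm_eq_ofReal_abs]
    exact ENNReal.ofReal_le_ofReal (hgle y)
  calc (∫⁻ z, (‖∫ y, K z y * f y ∂(acMeasure n σ)‖₊ : ℝ≥0∞) ^ p ∂(acMeasure n σ)) ^ (1 / p)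
      ≤ (∫⁻ z, (‖∫ y, K z y * g y ∂(acMeasure n σ)‖₊ : ℝ≥0∞) ^ p ∂(acMeasure n σ)) ^ (1 / p) :=
        ENNReal.rpow_le_rpow hstep1 (by positivity)
    _ ≤ ((c1 ^ (p / q) * c2) * ∫⁻ y, (‖g y‖₊ : ℝ≥0∞) ^ p ∂(acMeasure n σ)) ^ (1 / p) :=
        ENNReal.rpow_le_rpow hschur (by positivity)
    _ = D * (∫⁻ y, (‖g y‖₊ : ℝ≥0∞) ^ p ∂(acMeasure n σ)) ^ (1 / p) := by
        rw [ENNReal.mul_rpow_of_nonneg _ _ (by positivity), hDdef]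
    _ ≤ D * (∫⁻ y, (‖f y‖₊ : ℝ≥0∞) ^ p ∂(acMeasure n σ)) ^ (1 / p) :=
        mul_le_mul_right (ENNReal.rpow_le_rpow hstep3 (by positivity)) _
end
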